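/- Let n ≥ 1 be an integer. Then ∏_{l=0}^{n−1} Γ((l+1)/(n+1) + 1) = (2π)^{n/2} · (n+1)^{1/2 − (n+2)} · (n+1)!, where Γ denotes the real Gamma function. -/

import Mathlib

open Finset Real

lemma abs_one_sub_exp (θ : ℝ) :
    ‖1 - Complex.exp (θ * Complex.I)‖ = 2 * |Real.sin (θ / 2)| := by
  have h : 1 - Complex.exp (θ * Complex.I) =
      Complex.mk (1 - Real.cos θ) (-Real.sin θ) := by
    rw [Complex.exp_mul_I]
    apply Complex.ext <;> simp [Complex.cos_ofReal_re, Complex.sin_ofReal_re]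
  have h4 : Real.sqrt 4 = 2 := by
    rw [show (4:ℝ) = 2^2 by norm_num, Real.sqrt_sq (by norm_num : (0:ℝ) ≤ 2)]
  have h2 : 2 * |Real.sin (θ / 2)| = Real.sqrt (4 * ((1 - Real.cos θ) / 2)) := by
    rw [Real.abs_sin_half, Real.sqrt_mul (by norm_num), h4]
  rw [h, Complex.norm_def, Complex.normSq_mk, h2]
  congr 1
  nlinarith [Real.sin_sq_add_cos_sq θ]

lemma prod_sin_eq (n : ℕ) :
    ∏ k ∈ Finset.range n, Real.sin (Real.pi * (((k : ℝ) + 1) / ((n : ℝ) + 1)))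
      = ((n : ℝ) + 1) / 2 ^ n := by
  have hμ : IsPrimitiveRoot (Complex.exp (2 * Real.pi * Complex.I / ((n : ℕ) + 1 : ℕ))) (n + 1) :=
    Complex.isPrimitiveRoot_exp (n + 1) (Nat.succ_ne_zero n)
  have h := hμ.prod_one_sub_pow_eq_order
  apply_fun (‖·‖) at h
  rw [Complex.norm_prod] at h
  have key : ∀ k ∈ Finset.range n,
      ‖1 - Complex.exp (2 * Real.pi * Complex.I / ((n : ℕ) + 1 : ℕ)) ^ (k + 1)‖
        = 2 * Real.sin (Real.pi * (((k : ℝ) + 1) / ((n : ℝ) + 1))) := by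
    intro k hk
    have hk' : k < n := Finset.mem_range.mp hk
    have hexp : Complex.exp (2 * Real.pi * Complex.I / ((n : ℕ) + 1 : ℕ)) ^ (k + 1)
        = Complex.exp ((2 * Real.pi * ((k : ℝ) + 1) / ((n : ℝ) + 1) : ℝ) * Complex.I) := by
      rw [← Complex.exp_nat_mul]
      congr 1
      push_cast
      ring
    rw [hexp, abs_one_sub_exp]
    have harg : (2 * Real.pi * ((k : ℝ) + 1) / ((n : ℝ) + 1)) / 2
        = Real.pi * (((k : ℝ) + 1) / ((n : ℝ) + 1)) := by ring
    rw [harg, abs_of_pos]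
    apply Real.sin_pos_of_pos_of_lt_pi
    · positivity
    · have h1 : ((k : ℝ) + 1) / ((n : ℝ) + 1) < 1 := by
        rw [div_lt_one (by positivity)]
        exact_mod_cast Nat.add_lt_add_right hk' 1
      calc Real.pi * (((k : ℝ) + 1) / ((n : ℝ) + 1)) < Real.pi * 1 := by
            exact mul_lt_mul_of_pos_left h1 Real.pi_pos
        _ = Real.pi := mul_one _
  rw [Finset.prod_congr rfl key, Finset.prod_mul_distrib, Finset.prod_const,
    Finset.card_range] at h
  have habs : ‖(n : ℂ) + 1‖ = (n : ℝ) + 1 := by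
    rw [show ((n : ℂ) + 1) = (((n : ℝ) + 1 : ℝ) : ℂ) by push_cast; ring,
      Complex.norm_real, Real.norm_eq_abs, abs_of_pos (by positivity)]
  rw [habs] at h
  field_simp at h ⊢
  linarith [h]

lemma prod_gamma_eq (n : ℕ) :
    ∏ k ∈ Finset.range n, Real.Gamma (((k : ℝ) + 1) / ((n : ℝ) + 1))
      = (2 * Real.pi) ^ ((n : ℝ) / 2) * ((n : ℝ) + 1) ^ (-(1 : ℝ) / 2) := by
  set P := ∏ k ∈ Finset.range n, Real.Gamma (((k : ℝ) + 1) / ((n : ℝ) + 1)) with hP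
  have hx : ∀ k, k ∈ Finset.range n → (0 : ℝ) < ((k : ℝ) + 1) / ((n : ℝ) + 1) := by
    intro k _; positivity
  have hPpos : 0 < P := Finset.prod_pos fun k hk => Real.Gamma_pos_of_pos (hx k hk)
  have hrefl : ∏ k ∈ Finset.range n,
      Real.Gamma (1 - ((k : ℝ) + 1) / ((n : ℝ) + 1)) = P := by
    rw [hP, ← Finset.prod_range_reflect]
    apply Finset.prod_congr rfl
    intro k hk
    have hk' : k < n := Finset.mem_range.mp hk
    congr 1
    have h1 : ((n - 1 - k : ℕ) : ℝ) = (n : ℝ) - 1 - (k : ℝ) := by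
      have : k ≤ n - 1 := Nat.le_sub_one_of_lt hk'
      have hn1 : 1 ≤ n := Nat.one_le_of_lt (Nat.lt_of_le_of_lt (Nat.zero_le k) hk')
      push_cast [Nat.cast_sub this, Nat.cast_sub hn1]
      ring
    rw [h1]
    field_simp
    ring
  have hsq : P * P = (2 * Real.pi) ^ n / ((n : ℝ) + 1) := by
    calc P * P = ∏ k ∈ Finset.range n,
        (Real.Gamma (((k : ℝ) + 1) / ((n : ℝ) + 1)) *
          Real.Gamma (1 - ((k : ℝ) + 1) / ((n : ℝ) + 1))) := by
          rw [Finset.prod_mul_distrib, hrefl]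
      _ = ∏ k ∈ Finset.range n,
          (Real.pi / Real.sin (Real.pi * (((k : ℝ) + 1) / ((n : ℝ) + 1)))) := by
          exact Finset.prod_congr rfl fun k _ => Real.Gamma_mul_Gamma_one_sub _
      _ = Real.pi ^ n / (((n : ℝ) + 1) / 2 ^ n) := by
          rw [Finset.prod_div_distrib, Finset.prod_const, Finset.card_range, prod_sin_eq]
      _ = (2 * Real.pi) ^ n / ((n : ℝ) + 1) := by
          rw [mul_pow]; field_simp
  have hA : (0:ℝ) < (2 * Real.pi) ^ n / ((n : ℝ) + 1) := by positivity
  have hPeq : P = Real.sqrt ((2 * Real.pi) ^ n / ((n : ℝ) + 1)) := by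
    rw [← hsq]
    exact (Real.sqrt_mul_self hPpos.le).symm
  rw [hPeq, Real.sqrt_eq_rpow, Real.div_rpow (by positivity) (by positivity),
    ← Real.rpow_natCast (2 * Real.pi) n, ← Real.rpow_mul (by positivity), mul_one_div,
    div_eq_mul_inv, ← Real.rpow_neg_one (((n : ℝ) + 1) ^ ((1:ℝ)/2)),
    ← Real.rpow_mul (by positivity)]
  norm_num

/-- Formula (38) of the paper:
`∏_{l=0}^{n−1} Γ((l+1)/(n+1) + 1) = (2π)^{n/2}·(n+1)^{1/2 − (n+2)}·(n+1)!`. -/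
theorem prod_gamma_shift_eq (n : ℕ) (hn : 1 ≤ n) :
    ∏ l ∈ Finset.range n, Real.Gamma (((l : ℝ) + 1) / ((n : ℝ) + 1) + 1) =
      (2 * Real.pi) ^ ((n : ℝ) / 2) * ((n : ℝ) + 1) ^ ((1 : ℝ) / 2 - ((n : ℝ) + 2)) *
        ((n + 1).factorial : ℝ) := by
  have ha : (0:ℝ) < (n:ℝ) + 1 := by positivity
  have hstep : ∀ k ∈ Finset.range n,
      Real.Gamma (((k:ℝ)+1)/((n:ℝ)+1) + 1)
        = (((k:ℝ)+1)/((n:ℝ)+1)) * Real.Gamma (((k:ℝ)+1)/((n:ℝ)+1)) :=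
    fun k _ => Real.Gamma_add_one (by positivity)
  rw [Finset.prod_congr rfl hstep, Finset.prod_mul_distrib, prod_gamma_eq,
    Finset.prod_div_distrib, Finset.prod_const, Finset.card_range]
  have hfact : ∏ k ∈ Finset.range n, ((k:ℝ)+1) = (n.factorial : ℝ) := by
    exact_mod_cast congrArg (Nat.cast : ℕ → ℝ) (Finset.prod_range_add_one_eq_factorial n)
  rw [hfact, show ((n+1).factorial : ℝ) = ((n:ℝ)+1) * (n.factorial : ℝ) by
    rw [Nat.factorial_succ]; push_cast; ring]
  have hpow : ((n:ℝ)+1)^(n:ℕ) = ((n:ℝ)+1) ^ ((n:ℝ)) := (Real.rpow_natCast _ n).symm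
  rw [hpow]
  rw [div_mul_eq_mul_div, div_eq_iff (by positivity)]
  have key : ((n:ℝ)+1) ^ (-(1:ℝ)/2)
      = ((n:ℝ)+1) ^ ((1:ℝ)/2 - ((n:ℝ)+2)) * ((n:ℝ)+1) * ((n:ℝ)+1) ^ ((n:ℝ)) := by
    have h0 : ((1:ℝ)/2 - ((n:ℝ)+2)) + 1 + (n:ℝ) = -(1:ℝ)/2 := by ring
    rw [← h0, Real.rpow_add ha, Real.rpow_add ha, Real.rpow_one]
  rw [key]
  ring
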